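/- If M is a malcharacteristic subgroup of a group H and A is a malnormal subgroup of M, then A is a malcharacteristic subgroup of H. -/
import Mathlib


/-- A subgroup `M ≤ H` is malnormal if `g⁻¹Mg ∩ M ≠ 1` implies `g ∈ M`. -/
def Malnormal {H : Type*} [Group H] (M : Subgroup H) : Prop :=
  ∀ g : H, (∃ x ∈ M, x ≠ 1 ∧ g⁻¹ * x * g ∈ M) → g ∈ M

/-- A subgroup `M ≤ H` is malcharacteristic if for every automorphism `δ` of `H`,
`δ(M) ∩ M ≠ 1` implies that `δ` is conjugation by an element of `M`. -/
def Malcharacteristic {H : Type*} [Group H] (M : Subgroup H) : Prop :=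
  ∀ δ : MulAut H, (∃ x ∈ M, x ≠ 1 ∧ δ x ∈ M) →
    ∃ m ∈ M, ∀ h : H, δ h = m⁻¹ * h * m

theorem lem_malnorm_leq_malchar {H : Type*} [Group H] (M A : Subgroup H)
    (hM : Malcharacteristic M) (hAM : A ≤ M)
    (hA : Malnormal (A.subgroupOf M)) :
    Malcharacteristic A := by
  intro δ ⟨x, hxA, hx1, hdxA⟩
  obtain ⟨m, hmM, hm⟩ := hM δ ⟨x, hAM hxA, hx1, hAM hdxA⟩
  have hmA : (⟨m, hmM⟩ : M) ∈ A.subgroupOf M := by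
    apply hA
    refine ⟨⟨x, hAM hxA⟩, hxA, ?_, ?_⟩
    · simpa [Subtype.ext_iff] using hx1
    · show m⁻¹ * x * m ∈ A
      rw [← hm x]; exact hdxA
  exact ⟨m, hmA, hm⟩
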